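/- Fix a literal p and keep v_q constant for all literals q ≠ p. Then, for any literal r, the upper revised value v*_r, viewed as a function of v_p ∈ [0,1], has the form: there exist a, b with 0 ≤ a ≤ b ≤ 1 such that v*_r = a for v_p ∈ [0,a], v*_r = v_p for v_p ∈ [a,b], and v*_r = b for v_p ∈ [b,1]. -/

import Mathlib

open Finset

structure Doctrine (L : Type) [DecidableEq L] (neg : L → L) where
  clauses : Finset (Finset L)
  two_le : ∀ C ∈ clauses, 2 ≤ C.card
  tnd : ∀ p : L, ({p, neg p} : Finset L) ∈ clauses

noncomputable def clauseMin {L : Type} [DecidableEq L] (neg : L → L) (v : L → ℝ) (p : L)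
    (C : Finset L) : ℝ :=
  if h : (C.erase p).Nonempty then (C.erase p).inf' h (fun q => v (neg q)) else 0

noncomputable def step {L : Type} [DecidableEq L] (neg : L → L) (D : Doctrine L neg)
    (v : L → ℝ) : L → ℝ := fun p =>
  (D.clauses.filter (fun C => p ∈ C)).sup'
    ⟨{p, neg p}, Finset.mem_filter.mpr ⟨D.tnd p, by simp⟩⟩
    (clauseMin neg v p)

/-- The clamp function. -/
noncomputable def cl (a b x : ℝ) : ℝ := max a (min b x)

lemma cl_min {a b c d : ℝ} (hab : a ≤ b) (hcd : c ≤ d) (x : ℝ) :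
    min (cl a b x) (cl c d x) = cl (min a c) (min b d) x := by
  unfold cl
  simp only [min_def, max_def]
  split_ifs <;> linarith

lemma cl_max {a b c d : ℝ} (hab : a ≤ b) (hcd : c ≤ d) (x : ℝ) :
    max (cl a b x) (cl c d x) = cl (max a c) (max b d) x := by
  unfold cl
  simp only [min_def, max_def]
  split_ifs <;> linarith

lemma my_inf'_mono_fun {L : Type} {s : Finset L} (hs : s.Nonempty) {f g : L → ℝ}
    (h : ∀ b ∈ s, f b ≤ g b) : s.inf' hs f ≤ s.inf' hs g :=
  Finset.le_inf' _ _ fun b hb => le_trans (Finset.inf'_le _ hb) (h b hb)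

lemma inf'_cl {L : Type} (s : Finset L) (hs : s.Nonempty) (A B : L → ℝ)
    (hAB : ∀ q, A q ≤ B q) (x : ℝ) :
    s.inf' hs (fun q => cl (A q) (B q) x) = cl (s.inf' hs A) (s.inf' hs B) x := by
  induction hs using Finset.Nonempty.cons_induction with
  | singleton a => simp
  | cons a s ha hs ih =>
      rw [Finset.inf'_cons hs, Finset.inf'_cons hs, Finset.inf'_cons hs, ih,
        cl_min (hAB a) (my_inf'_mono_fun _ (fun q _ => hAB q))]

lemma sup'_cl {L : Type} (s : Finset L) (hs : s.Nonempty) (A B : L → ℝ)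
    (hAB : ∀ q, A q ≤ B q) (x : ℝ) :
    s.sup' hs (fun q => cl (A q) (B q) x) = cl (s.sup' hs A) (s.sup' hs B) x := by
  induction hs using Finset.Nonempty.cons_induction with
  | singleton a => simp
  | cons a s ha hs ih =>
      rw [Finset.sup'_cons hs, Finset.sup'_cons hs, Finset.sup'_cons hs, ih,
        cl_max (hAB a) (Finset.sup'_mono_fun (fun q _ => hAB q))]

lemma clauseMin_mono {L : Type} [DecidableEq L] (neg : L → L) {A B : L → ℝ}
    (h : ∀ q, A q ≤ B q) (p : L) (C : Finset L) :
    clauseMin neg A p C ≤ clauseMin neg B p C := by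
  unfold clauseMin
  split
  · exact my_inf'_mono_fun _ (fun q _ => h (neg q))
  · exact le_rfl

lemma step_mono {L : Type} [DecidableEq L] (neg : L → L) (D : Doctrine L neg)
    {A B : L → ℝ} (h : ∀ q, A q ≤ B q) (r : L) :
    step neg D A r ≤ step neg D B r :=
  Finset.sup'_mono_fun (fun C _ => clauseMin_mono neg h r C)

lemma erase_nonempty_of_mem {L : Type} [DecidableEq L] {C : Finset L} {r : L}
    (hr : r ∈ C) (h2 : 2 ≤ C.card) : (C.erase r).Nonempty := by
  rw [← Finset.card_pos, Finset.card_erase_of_mem hr]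
  omega

lemma step_nonneg {L : Type} [DecidableEq L] (neg : L → L) (D : Doctrine L neg)
    {A : L → ℝ} (h : ∀ q, 0 ≤ A q) (r : L) : 0 ≤ step neg D A r := by
  unfold step
  refine (Finset.le_sup'_iff _).2 ?_
  refine ⟨{r, neg r}, Finset.mem_filter.mpr ⟨D.tnd r, by simp⟩, ?_⟩
  unfold clauseMin
  split
  · exact Finset.le_inf' _ _ (fun q _ => h (neg q))
  · exact le_rfl

lemma step_le_one {L : Type} [DecidableEq L] (neg : L → L) (D : Doctrine L neg)
    {A : L → ℝ} (h : ∀ q, A q ≤ 1) (r : L) : step neg D A r ≤ 1 := by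
  unfold step
  apply Finset.sup'_le
  intro C hC
  unfold clauseMin
  split
  · next hne => exact le_trans (Finset.inf'_le _ hne.choose_spec) (h _)
  · exact zero_le_one

/-- `step` commutes with clamping. -/
lemma step_cl {L : Type} [DecidableEq L] (neg : L → L) (D : Doctrine L neg)
    {A B w : L → ℝ} (hAB : ∀ q, A q ≤ B q) (x : ℝ)
    (hw : ∀ q, w q = cl (A q) (B q) x) (r : L) :
    step neg D w r = cl (step neg D A r) (step neg D B r) x := by
  unfold step
  have key : ∀ C ∈ D.clauses.filter (fun C => r ∈ C),
      clauseMin neg w r C = cl (clauseMin neg A r C) (clauseMin neg B r C) x := by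
    intro C hC
    rw [Finset.mem_filter] at hC
    have hne : (C.erase r).Nonempty := erase_nonempty_of_mem hC.2 (D.two_le C hC.1)
    unfold clauseMin
    rw [dif_pos hne, dif_pos hne, dif_pos hne]
    calc (C.erase r).inf' hne (fun q => w (neg q))
        = (C.erase r).inf' hne (fun q => cl (A (neg q)) (B (neg q)) x) := by
          apply Finset.inf'_congr _ rfl; intro q _; exact hw (neg q)
      _ = cl ((C.erase r).inf' hne (fun q => A (neg q)))
            ((C.erase r).inf' hne (fun q => B (neg q))) x :=
          inf'_cl _ hne _ _ (fun q => hAB (neg q)) x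
  erw [Finset.sup'_congr _ rfl key]
  exact sup'_cl _ _ _ _ (fun C => clauseMin_mono neg hAB r C) x

/-- Each coordinate of each iterate is a clamp function of `x`, with parameters
given by the iterates at the endpoint valuations. -/
lemma iterate_clamp {L : Type} [DecidableEq L] (neg : L → L) (D : Doctrine L neg)
    (v : L → ℝ) (hv : ∀ q, 0 ≤ v q ∧ v q ≤ 1) (p : L) (n : ℕ) :
    ∃ A B : L → ℝ, (∀ q, 0 ≤ A q ∧ A q ≤ B q ∧ B q ≤ 1) ∧
      ∀ x, 0 ≤ x → x ≤ 1 → ∀ q,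
        (step neg D)^[n] (Function.update v p x) q = cl (A q) (B q) x := by
  induction n with
  | zero =>
      refine ⟨Function.update v p 0, Function.update v p 1, ?_, ?_⟩
      · intro q
        rcases eq_or_ne q p with rfl | hq
        · simp
        · simp [Function.update_of_ne hq, (hv q).1, (hv q).2]
      · intro x hx0 hx1 q
        rcases eq_or_ne q p with rfl | hq
        · simp [cl, min_eq_right hx1, max_eq_right hx0]
        · simp [Function.update_of_ne hq, cl, max_eq_left (min_le_left _ _)]
  | succ n ih =>
      obtain ⟨A, B, hb, hcl⟩ := ih
      refine ⟨step neg D A, step neg D B, ?_, ?_⟩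
      · intro q
        exact ⟨step_nonneg neg D (fun q => (hb q).1) q,
          step_mono neg D (fun q => (hb q).2.1) q,
          step_le_one neg D (fun q => (hb q).2.2) q⟩
      · intro x hx0 hx1 q
        rw [Function.iterate_succ_apply']
        exact step_cl neg D (fun q => (hb q).2.1) x (hcl x hx0 hx1) q

theorem upperRevised_piecewise {L : Type} [Fintype L] [DecidableEq L]
    (neg : L → L) (hneg : ∀ p, neg (neg p) = p) (D : Doctrine L neg)
    (v : L → ℝ) (hv : ∀ q, 0 ≤ v q ∧ v q ≤ 1) (p : L)
    (V : ℝ → (L → ℝ))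
    (hV : ∀ x, (∃ n : ℕ, V x = (step neg D)^[n] (Function.update v p x)) ∧
      step neg D (V x) = V x) :
    ∀ r : L, ∃ a b : ℝ, 0 ≤ a ∧ a ≤ b ∧ b ≤ 1 ∧
      ∀ x, 0 ≤ x → x ≤ 1 →
        (x ≤ a → V x r = a) ∧ (a ≤ x → x ≤ b → V x r = x) ∧ (b ≤ x → V x r = b) := by
  intro r
  have stab : ∀ x n m, n ≤ m → V x = (step neg D)^[n] (Function.update v p x) →
      V x = (step neg D)^[m] (Function.update v p x) := by
    intro x n m hnm h
    obtain ⟨k, rfl⟩ := Nat.exists_eq_add_of_le hnm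
    calc V x = (step neg D)^[k] (V x) := (Function.iterate_fixed (hV x).2 k).symm
      _ = (step neg D)^[k] ((step neg D)^[n] (Function.update v p x)) := by rw [← h]
      _ = (step neg D)^[k + n] (Function.update v p x) :=
          (Function.iterate_add_apply _ k n _).symm
      _ = (step neg D)^[n + k] (Function.update v p x) := by rw [Nat.add_comm]
  obtain ⟨n0, h0⟩ := (hV 0).1
  obtain ⟨n1, h1⟩ := (hV 1).1
  have main : ∀ x, 0 ≤ x → x ≤ 1 →
      ∃ a b : ℝ, 0 ≤ a ∧ a ≤ b ∧ b ≤ 1 ∧ V 0 r = a ∧ V 1 r = b ∧ V x r = cl a b x := by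
    intro x hx0 hx1
    obtain ⟨nx, hx⟩ := (hV x).1
    set M := max (max n0 n1) nx with hM
    obtain ⟨A, B, hb, hcl⟩ := iterate_clamp neg D v hv p M
    obtain ⟨hb0, hbab, hb1⟩ := hb r
    refine ⟨A r, B r, hb0, hbab, hb1, ?_, ?_, ?_⟩
    · rw [stab 0 n0 M (by omega) h0, hcl 0 le_rfl zero_le_one r]
      unfold cl
      rw [min_eq_right (le_trans hb0 hbab), max_eq_left hb0]
    · rw [stab 1 n1 M (by omega) h1, hcl 1 zero_le_one le_rfl r]
      unfold cl
      rw [min_eq_left hb1, max_eq_right hbab]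
    · rw [stab x nx M (by omega) hx, hcl x hx0 hx1 r]
  obtain ⟨a, b, ha0, hab, hb1, hVa, hVb, _⟩ := main 0 le_rfl zero_le_one
  refine ⟨a, b, ha0, hab, hb1, ?_⟩
  intro x hx0 hx1
  obtain ⟨a', b', _, _, _, hVa', hVb', hVx⟩ := main x hx0 hx1
  rw [hVa'] at hVa
  rw [hVb'] at hVb
  rw [hVa, hVb] at hVx
  unfold cl at hVx
  refine ⟨fun h => ?_, fun h1 h2 => ?_, fun h => ?_⟩
  · rw [hVx, min_eq_right (le_trans h hab), max_eq_left h]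
  · rw [hVx, min_eq_right h2, max_eq_right h1]
  · rw [hVx, min_eq_left h, max_eq_right hab]
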